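/- If the top-1 hardest negative similarity exceeds the positive similarity for every i (i.e., max_{j≠i}⟨I_i, T_j⟩ > ⟨I_i, T_i⟩), then the zero-temperature limit of the contrastive loss C(I,T) = (1/M)Σ_i −log(exp(⟨I_i,T_i⟩/τ)/Σ_j exp(⟨I_i,T_j⟩/τ)), scaled by τ, equals the negative relative alignment (1/M)Σ_i (max_{j≠i}⟨I_i,T_j⟩ − ⟨I_i,T_i⟩). -/

import Mathlib

open Real Filter

lemma tendsto_tau_log_sum {M : ℕ} (hu : (Finset.univ : Finset (Fin M)).Nonempty)
    (a : Fin M → ℝ) :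
    Tendsto (fun τ : ℝ => τ * Real.log (∑ j : Fin M, Real.exp (a j / τ)))
      (nhdsWithin 0 (Set.Ioi 0)) (nhds (Finset.univ.sup' hu a)) := by
  set m := Finset.univ.sup' hu a with hm
  have hmem : ∃ j : Fin M, a j = m := by
    obtain ⟨j, hj, hja⟩ := Finset.exists_mem_eq_sup' hu a
    exact ⟨j, hja.symm⟩
  have hlow : ∀ᶠ τ : ℝ in nhdsWithin 0 (Set.Ioi 0),
      m ≤ τ * Real.log (∑ j : Fin M, Real.exp (a j / τ)) := by
    filter_upwards [self_mem_nhdsWithin] with τ (hτ : 0 < τ)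
    obtain ⟨j, hj⟩ := hmem
    have hsum_pos : 0 < ∑ j : Fin M, Real.exp (a j / τ) :=
      Finset.sum_pos (fun j _ => Real.exp_pos _) hu
    have h1 : Real.exp (m / τ) ≤ ∑ j : Fin M, Real.exp (a j / τ) := by
      rw [← hj]
      exact Finset.single_le_sum (f := fun j => Real.exp (a j / τ))
        (fun j _ => (Real.exp_pos _).le) (Finset.mem_univ j)
    have h2 : m / τ ≤ Real.log (∑ j : Fin M, Real.exp (a j / τ)) :=
      (Real.le_log_iff_exp_le hsum_pos).2 h1
    calc m = τ * (m / τ) := by field_simp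
      _ ≤ τ * Real.log (∑ j : Fin M, Real.exp (a j / τ)) := by
          exact mul_le_mul_of_nonneg_left h2 hτ.le
  have hhigh : ∀ᶠ τ : ℝ in nhdsWithin 0 (Set.Ioi 0),
      τ * Real.log (∑ j : Fin M, Real.exp (a j / τ)) ≤ m + τ * Real.log M := by
    filter_upwards [self_mem_nhdsWithin] with τ (hτ : 0 < τ)
    have hsum_pos : 0 < ∑ j : Fin M, Real.exp (a j / τ) :=
      Finset.sum_pos (fun j _ => Real.exp_pos _) hu
    have h1 : ∑ j : Fin M, Real.exp (a j / τ) ≤ M * Real.exp (m / τ) := by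
      calc ∑ j : Fin M, Real.exp (a j / τ) ≤ ∑ _j : Fin M, Real.exp (m / τ) := by
            apply Finset.sum_le_sum
            intro j _
            apply Real.exp_le_exp.2
            gcongr
            exact Finset.le_sup' a (Finset.mem_univ j)
        _ = M * Real.exp (m / τ) := by simp [Finset.sum_const]
    have h2 : Real.log (∑ j : Fin M, Real.exp (a j / τ)) ≤
        Real.log M + m / τ := by
      have hM0 : (0 : ℝ) < M := by
        have := hu
        rcases Nat.eq_zero_or_pos M with h | h
        · subst h; exact absurd this (by simp)
        · exact_mod_cast h
      calc Real.log (∑ j : Fin M, Real.exp (a j / τ))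
          ≤ Real.log (M * Real.exp (m / τ)) := Real.log_le_log hsum_pos h1
        _ = Real.log M + m / τ := by rw [Real.log_mul (ne_of_gt hM0) (Real.exp_ne_zero _), Real.log_exp]
    calc τ * Real.log (∑ j : Fin M, Real.exp (a j / τ))
        ≤ τ * (Real.log M + m / τ) := mul_le_mul_of_nonneg_left h2 hτ.le
      _ = m + τ * Real.log M := by field_simp; ring
  have hub : Tendsto (fun τ : ℝ => m + τ * Real.log M)
      (nhdsWithin 0 (Set.Ioi 0)) (nhds m) := by
    have : Tendsto (fun τ : ℝ => m + τ * Real.log M) (nhds 0) (nhds (m + 0 * Real.log M)) := by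
      exact (tendsto_const_nhds.add ((continuous_id.mul continuous_const).tendsto 0))
    simpa using this.mono_left nhdsWithin_le_nhds
  exact tendsto_of_tendsto_of_tendsto_of_le_of_le' tendsto_const_nhds hub hlow hhigh

theorem zero_temp_contrastive_eq_neg_alignment (M d : ℕ) (hM : 2 ≤ M)
    (I T : Fin M → EuclideanSpace ℝ (Fin d))
    (hI : ∀ i, ‖I i‖ = 1) (hT : ∀ i, ‖T i‖ = 1)
    (hne : ∀ i : Fin M, (Finset.univ.erase i).Nonempty)
    (hhard : ∀ i : Fin M,
      (inner ℝ (I i) (T i) : ℝ) <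
        (Finset.univ.erase i).sup' (hne i) (fun j => (inner ℝ (I i) (T j) : ℝ))) :
    Tendsto (fun τ : ℝ =>
        τ * ((1 / (M : ℝ)) * ∑ i : Fin M,
          -Real.log (Real.exp ((inner ℝ (I i) (T i) : ℝ) / τ) /
            ∑ j : Fin M, Real.exp ((inner ℝ (I i) (T j) : ℝ) / τ))))
      (nhdsWithin 0 (Set.Ioi 0))
      (nhds ((1 / (M : ℝ)) * ∑ i : Fin M,
        ((Finset.univ.erase i).sup' (hne i) (fun j => (inner ℝ (I i) (T j) : ℝ))
          - (inner ℝ (I i) (T i) : ℝ)))) := by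
  haveI : NeZero M := ⟨by omega⟩
  have hu : (Finset.univ : Finset (Fin M)).Nonempty := ⟨⟨0, by omega⟩, Finset.mem_univ _⟩
  set a : Fin M → Fin M → ℝ := fun i j => (inner ℝ (I i) (T j) : ℝ) with ha
  have hsup : ∀ i, Finset.univ.sup' hu (a i) = (Finset.univ.erase i).sup' (hne i) (a i) := by
    intro i
    apply le_antisymm
    · apply Finset.sup'_le
      intro j _
      by_cases h : j = i
      · subst h; exact le_of_lt (hhard j)
      · exact Finset.le_sup' (a i) (Finset.mem_erase.2 ⟨h, Finset.mem_univ j⟩)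
    · apply Finset.sup'_le
      intro j _
      exact Finset.le_sup' (a i) (Finset.mem_univ j)
  have hterm : ∀ i : Fin M,
      Tendsto (fun τ : ℝ => τ * Real.log (∑ j : Fin M, Real.exp (a i j / τ)) - a i i)
        (nhdsWithin 0 (Set.Ioi 0))
        (nhds ((Finset.univ.erase i).sup' (hne i) (a i) - a i i)) := by
    intro i
    have := (tendsto_tau_log_sum hu (a i)).sub_const (a i i)
    rwa [hsup i] at this
  have hsum : Tendsto (fun τ : ℝ => (1 / (M : ℝ)) * ∑ i : Fin M,
      (τ * Real.log (∑ j : Fin M, Real.exp (a i j / τ)) - a i i))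
      (nhdsWithin 0 (Set.Ioi 0))
      (nhds ((1 / (M : ℝ)) * ∑ i : Fin M,
        ((Finset.univ.erase i).sup' (hne i) (a i) - a i i))) :=
    (tendsto_finset_sum _ (fun i _ => hterm i)).const_mul _
  apply hsum.congr'
  filter_upwards [self_mem_nhdsWithin] with τ (hτ : 0 < τ)
  have hτ' : τ ≠ 0 := ne_of_gt hτ
  have key : ∀ i : Fin M,
      -Real.log (Real.exp (a i i / τ) / ∑ j : Fin M, Real.exp (a i j / τ))
        = Real.log (∑ j : Fin M, Real.exp (a i j / τ)) - a i i / τ := by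
    intro i
    have hsum_pos : 0 < ∑ j : Fin M, Real.exp (a i j / τ) :=
      Finset.sum_pos (fun j _ => Real.exp_pos _) hu
    rw [Real.log_div (Real.exp_ne_zero _) (ne_of_gt hsum_pos), Real.log_exp]
    ring
  simp only [ha]
  rw [mul_comm τ, mul_assoc, Finset.sum_mul]
  congr 1
  apply Finset.sum_congr rfl
  intro i _
  rw [key i, sub_mul, div_mul_cancel₀ _ hτ']
  ring
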